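/- Let 0 < p < 1 and τ ∈ ℕ with τ ≥ 1, and define h_0 = (√p)^τ, h_m = (1−p)·L^{(τ)}_m(√p) for m ≥ 1, α = √p + 1/√p, β = √p − 1/√p. For any M ≥ 1 define a, b ∈ ℝ^M by a_i = (i+1)·h_{i+1} + i·α·h_i + (i−1)·h_{i−1} and b_i = β·h_i for i = 1,…,M. Then a = −τ·b; moreover h_1 = τ·(1−p)·(√p)^{τ−1} ≠ 0, so b ≠ 0 and the delay is recovered in closed form as τ = −(b^T·a)/(b^T·b). -/

import Mathlib

/-- The polynomial factor `L_m^{(τ)}(√p)` in the Laguerre-domain delay description. -/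
noncomputable def delayLaguerrePoly (p : ℝ) (τ m : ℕ) : ℝ :=
  (-Real.sqrt p) ^ ((m : ℤ) - (τ : ℤ)) *
    ∑ n ∈ Finset.range τ,
      ((m + n).choose n : ℝ) * ((m - 1).choose (τ - n - 1) : ℝ) * (-p) ^ n

/-- The Markov parameters of the `τ`-step delay in Laguerre-domain:
`h_0 = (√p)^τ` and `h_m = (1−p)·L_m^{(τ)}(√p)` for `m ≥ 1`. -/
noncomputable def delayMarkov (p : ℝ) (τ : ℕ) (m : ℕ) : ℝ :=
  if m = 0 then Real.sqrt p ^ τ else (1 - p) * delayLaguerrePoly p τ m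

open Finset

/-- The polynomial part of `delayLaguerrePoly`. -/
noncomputable def dQ (p : ℝ) (τ m : ℕ) : ℝ :=
  ∑ n ∈ Finset.range τ,
      ((m + n).choose n : ℝ) * ((m - 1).choose (τ - n - 1) : ℝ) * (-p) ^ n

lemma chooseR1 (a b : ℕ) :
    ((a.choose (b+1) : ℝ)) * ((b : ℝ)+1) = (a.choose b : ℝ) * ((a : ℝ) - b) := by
  rcases le_or_gt b a with h | h
  · have h1 := Nat.choose_succ_right_eq a b
    calc ((a.choose (b+1) : ℝ)) * ((b:ℝ)+1)
        = ((a.choose (b+1) * (b+1) : ℕ) : ℝ) := by push_cast; ring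
      _ = ((a.choose b * (a-b) : ℕ) : ℝ) := by rw [h1]
      _ = (a.choose b : ℝ) * ((a:ℝ) - b) := by push_cast [h]; ring
  · rw [Nat.choose_eq_zero_of_lt h, Nat.choose_eq_zero_of_lt (h.trans (Nat.lt_succ_self b))]
    simp

lemma chooseR2 (a b : ℕ) :
    ((a:ℝ)+1) * (a.choose b : ℝ) = ((a+1).choose (b+1) : ℝ) * ((b:ℝ)+1) := by
  have := Nat.add_one_mul_choose_eq a b
  exact_mod_cast congrArg (Nat.cast : ℕ → ℝ) this

lemma coeff_step (m n j : ℕ) (hm : 1 ≤ m) :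
    ((m:ℝ) + ((n:ℝ)+(j:ℝ)+2)) * ((m+n).choose n : ℝ) * ((m-1).choose (j+1) : ℝ)
      - ((m:ℝ)+1) * ((m+n+1).choose n : ℝ) * ((m).choose (j+1) : ℝ)
  = ((m:ℝ) - ((n:ℝ)+(j:ℝ)+2)) * ((m+n+1).choose (n+1) : ℝ) * ((m-1).choose j : ℝ)
      - ((m:ℝ)-1) * ((m+n).choose (n+1) : ℝ) * ((m-2).choose j : ℝ) := by
  rcases le_or_gt m j with hj | hj
  · rw [Nat.choose_eq_zero_of_lt (show m-1 < j+1 by omega),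
        Nat.choose_eq_zero_of_lt (show m < j+1 by omega),
        Nat.choose_eq_zero_of_lt (show m-1 < j by omega),
        Nat.choose_eq_zero_of_lt (show m-2 < j by omega)]
    simp
  · rcases Nat.lt_or_ge (j+1) m with h2 | h2
    · -- interior case : j + 2 ≤ m
      have hm2 : 2 ≤ m := by omega
      have e1 := chooseR1 (m+n+1) n
      have e2 := chooseR2 (m+n) n
      have e3 := chooseR1 (m+n) n
      have e4 := chooseR2 (m-2) j
      have e5 := chooseR1 (m-1) j
      have e6 := chooseR2 (m-1) j
      rw [show m-2+1 = m-1 by omega] at e4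
      rw [show m-1+1 = m by omega] at e6
      have c4 : ((m-2 : ℕ) : ℝ) = (m:ℝ)-2 := by
        rw [Nat.cast_sub (by omega)]; norm_num
      have c5 : ((m-1 : ℕ) : ℝ) = (m:ℝ)-1 := by
        rw [Nat.cast_sub (by omega)]; norm_num
      rw [c4] at e4
      rw [c5] at e5
      rw [c5] at e6
      push_cast at e1 e2 e3
      have hq1 : ((m+n+1).choose n : ℝ)*((m:ℝ)+1)
          = ((m:ℝ)+(n:ℝ)+1) * ((m+n).choose n : ℝ) := by linear_combination -e1 - e2
      have hq2 : ((m:ℝ)+(n:ℝ)+1) * ((m+n).choose n : ℝ)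
          = ((m+n+1).choose (n+1) : ℝ)*((n:ℝ)+1) := by linear_combination e2
      have hq3 : ((m+n).choose (n+1) : ℝ)*((n:ℝ)+1)
          = ((m+n).choose n : ℝ)*(m:ℝ) := by linear_combination e3
      have hq4 : ((m:ℝ)-1)*((m-2).choose j : ℝ)
          = ((m-1).choose (j+1) : ℝ)*((j:ℝ)+1) := by linear_combination e4
      have hq5 : ((m-1).choose (j+1) : ℝ)*((j:ℝ)+1)
          = ((m-1).choose j : ℝ)*((m:ℝ)-1-(j:ℝ)) := by linear_combination e5
      have hq6 : (m:ℝ)*((m-1).choose j : ℝ)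
          = ((m).choose (j+1) : ℝ)*((j:ℝ)+1) := by linear_combination e6
      refine mul_left_cancel₀ (a := ((n:ℝ)+1)*((j:ℝ)+1)) (by positivity) ?_
      linear_combination
        (-(((n:ℝ)+1)*((j:ℝ)+1)*((m).choose (j+1) : ℝ)))*hq1
        + (((j:ℝ)+1)*((m:ℝ)-(n:ℝ)-(j:ℝ)-2)*((m-1).choose j : ℝ))*hq2
        + (((j:ℝ)+1)*((m:ℝ)-1)*((m-2).choose j : ℝ))*hq3
        + (((j:ℝ)+1)*(m:ℝ)*((m+n).choose n : ℝ))*hq4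
        + ((((n:ℝ)+1)*((m:ℝ)+(n:ℝ)+(j:ℝ)+2) + (m:ℝ)*((j:ℝ)+1))*((m+n).choose n : ℝ))*hq5
        + (((n:ℝ)+1)*((m:ℝ)+(n:ℝ)+1)*((m+n).choose n : ℝ))*hq6
    · -- boundary : m = j+1
      have hmj : m = j+1 := by omega
      subst hmj
      rcases Nat.eq_zero_or_pos j with rfl | hj1
      · -- j = 0, m = 1
        norm_num
        have e := chooseR1 (n+2) n
        push_cast at e
        rw [show 1+n+1 = n+2 by omega]
        linear_combination e
      · -- j >= 1, m = j+1
        rw [show j+1-1 = j by omega, show j+1-2 = j-1 by omega,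
            Nat.choose_eq_zero_of_lt (show j < j+1 by omega),
            Nat.choose_eq_zero_of_lt (show j-1 < j by omega),
            Nat.choose_self, Nat.choose_self,
            show j+1+n+1 = j+n+2 by omega, show j+1+n = j+n+1 by omega]
        have e := chooseR1 (j+n+2) n
        push_cast at e ⊢
        linear_combination e

lemma shift_sum (τ : ℕ) (hτ : 1 ≤ τ) (E F : ℕ → ℝ) (x : ℝ)
    (h0 : F 0 = 0) (hlast : E (τ-1) = 0) (hEF : ∀ n, n+1 < τ → E n = F (n+1)) :
    ∑ n ∈ Finset.range τ, E n * x^(n+1) = ∑ n ∈ Finset.range τ, F n * x^n := by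
  obtain ⟨t, rfl⟩ : ∃ t, τ = t+1 := ⟨τ-1, by omega⟩
  rw [Finset.sum_range_succ, Finset.sum_range_succ']
  have hc : ∑ n ∈ Finset.range t, E n * x^(n+1)
      = ∑ n ∈ Finset.range t, F (n+1) * x^(n+1) :=
    Finset.sum_congr rfl (fun n hn => by
      rw [hEF n (by have := Finset.mem_range.mp hn; omega)])
  have hl : E t = 0 := hlast
  rw [hc, hl, h0]
  ring

lemma Qrec (p : ℝ) (τ : ℕ) (hτ : 1 ≤ τ) (m : ℕ) (hm : 1 ≤ m) :
    ((m:ℝ)+1) * p * dQ p τ (m+1) + ((m:ℝ)-1) * dQ p τ (m-1)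
      = (((m:ℝ)+(τ:ℝ))*p + ((m:ℝ)-(τ:ℝ))) * dQ p τ m := by
  set E : ℕ → ℝ := fun n =>
    ((m:ℝ)+(τ:ℝ)) * ((m+n).choose n : ℝ) * ((m-1).choose (τ-n-1) : ℝ)
      - ((m:ℝ)+1) * ((m+n+1).choose n : ℝ) * ((m).choose (τ-n-1) : ℝ) with hE
  set F : ℕ → ℝ := fun n =>
    ((m:ℝ)-(τ:ℝ)) * ((m+n).choose n : ℝ) * ((m-1).choose (τ-n-1) : ℝ)
      - ((m:ℝ)-1) * ((m-1+n).choose n : ℝ) * ((m-2).choose (τ-n-1) : ℝ) with hF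
  have cτ : ((τ-1 : ℕ) : ℝ) = (τ:ℝ)-1 := by rw [Nat.cast_sub (by omega)]; norm_num
  have h0 : F 0 = 0 := by
    simp only [hF, Nat.add_zero, Nat.choose_zero_right, Nat.cast_one, Nat.sub_zero]
    rcases le_or_gt τ m with h | h
    · rcases Nat.eq_or_lt_of_le hm with h1 | h1
      · have : τ = 1 := by omega
        subst this
        simp [← h1]
      · -- 2 ≤ m, τ ≤ m
        have cm1 : ((m-1 : ℕ) : ℝ) = (m:ℝ)-1 := by rw [Nat.cast_sub (by omega)]; norm_num
        have cm2 : ((m-2 : ℕ) : ℝ) = (m:ℝ)-2 := by rw [Nat.cast_sub (by omega)]; norm_num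
        have e1 := chooseR1 (m-1) (τ-1)
        have e2 := chooseR2 (m-2) (τ-1)
        rw [show τ-1+1 = τ by omega] at e1 e2
        rw [show m-2+1 = m-1 by omega] at e2
        rw [cτ, cm1] at e1
        rw [cτ, cm2] at e2
        linear_combination -e1 - e2
    · rw [Nat.choose_eq_zero_of_lt (show m-1 < τ-1 by omega),
          Nat.choose_eq_zero_of_lt (show m-2 < τ-1 by omega)]
      simp
  have hlast : E (τ-1) = 0 := by
    simp only [hE]
    rw [show τ-(τ-1)-1 = 0 by omega, show m+(τ-1)+1 = m+τ by omega,
        show m+(τ-1) = m+τ-1 by omega]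
    simp only [Nat.choose_zero_right, Nat.cast_one, mul_one]
    have cmτ : ((m+τ-1 : ℕ) : ℝ) = (m:ℝ)+(τ:ℝ)-1 := by
      rw [Nat.cast_sub (by omega)]; push_cast; ring
    have e1 := chooseR2 (m+τ-1) (τ-1)
    have e2 := chooseR1 (m+τ) (τ-1)
    rw [show τ-1+1 = τ by omega] at e1 e2
    rw [show m+τ-1+1 = m+τ by omega] at e1
    rw [cτ, cmτ] at e1
    rw [cτ] at e2
    push_cast at e2
    linear_combination e1 + e2
  have hEF : ∀ n, n+1 < τ → E n = F (n+1) := by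
    intro n hn
    obtain ⟨j, rfl⟩ : ∃ j, τ = n+j+2 := ⟨τ-n-2, by omega⟩
    simp only [hE, hF]
    rw [show n+j+2-n-1 = j+1 by omega, show n+j+2-(n+1)-1 = j by omega,
        show m+(n+1) = m+n+1 by omega, show m-1+(n+1) = m+n by omega]
    push_cast
    linear_combination coeff_step m n j hm
  have key := shift_sum τ hτ E F (-p) h0 hlast hEF
  have main : ∑ n ∈ Finset.range τ,
      ( ((m:ℝ)+1) * p * (((m+n+1).choose n : ℝ) * ((m).choose (τ-n-1) : ℝ) * (-p)^n)
        + ((m:ℝ)-1) * (((m-1+n).choose n : ℝ) * ((m-2).choose (τ-n-1) : ℝ) * (-p)^n)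
        - (((m:ℝ)+(τ:ℝ))*p + ((m:ℝ)-(τ:ℝ)))
            * (((m+n).choose n : ℝ) * ((m-1).choose (τ-n-1) : ℝ) * (-p)^n) )
      = 0 := by
    have hc : ∀ n ∈ Finset.range τ,
        ( ((m:ℝ)+1) * p * (((m+n+1).choose n : ℝ) * ((m).choose (τ-n-1) : ℝ) * (-p)^n)
          + ((m:ℝ)-1) * (((m-1+n).choose n : ℝ) * ((m-2).choose (τ-n-1) : ℝ) * (-p)^n)
          - (((m:ℝ)+(τ:ℝ))*p + ((m:ℝ)-(τ:ℝ)))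
              * (((m+n).choose n : ℝ) * ((m-1).choose (τ-n-1) : ℝ) * (-p)^n) )
        = E n * (-p)^(n+1) - F n * (-p)^n := by
      intro n _
      simp only [hE, hF]
      ring
    rw [Finset.sum_congr rfl hc, Finset.sum_sub_distrib, key, sub_self]
  have eplus : dQ p τ (m+1) = ∑ n ∈ Finset.range τ,
      ((m+n+1).choose n : ℝ) * ((m).choose (τ-n-1) : ℝ) * (-p)^n := by
    unfold dQ
    exact Finset.sum_congr rfl (fun n _ => by
      rw [show m+1+n = m+n+1 by omega, Nat.add_sub_cancel])
  have eminus : dQ p τ (m-1) = ∑ n ∈ Finset.range τ,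
      ((m-1+n).choose n : ℝ) * ((m-2).choose (τ-n-1) : ℝ) * (-p)^n := by
    unfold dQ
    exact Finset.sum_congr rfl (fun n _ => by rw [show m-1-1 = m-2 by omega])
  rw [eplus, eminus]
  unfold dQ
  rw [← sub_eq_zero]
  rw [Finset.mul_sum, Finset.mul_sum, Finset.mul_sum, ← Finset.sum_add_distrib,
      ← Finset.sum_sub_distrib]
  exact main


lemma dQ_one (p : ℝ) (τ : ℕ) (hτ : 1 ≤ τ) : dQ p τ 1 = (τ:ℝ) * (-p)^(τ-1) := by
  unfold dQ
  rw [Finset.sum_eq_single_of_mem (τ-1) (Finset.mem_range.mpr (by omega))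
    (fun n _hn hne => by
      have hn' := Finset.mem_range.mp _hn
      rw [show (1:ℕ)-1 = 0 from rfl,
        Nat.choose_eq_zero_of_lt (show 0 < τ-n-1 by omega)]
      simp)]
  rw [show (1:ℕ)-1 = 0 from rfl, show τ-(τ-1)-1 = 0 by omega,
      show 1+(τ-1) = τ by omega, Nat.choose_symm hτ, Nat.choose_one_right]
  simp

lemma dM_ne (p : ℝ) (τ : ℕ) (k : ℕ) (hk : k ≠ 0) :
    delayMarkov p τ k = (1-p) * ((-Real.sqrt p)^((k:ℤ) - (τ:ℤ)) * dQ p τ k) := by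
  unfold delayMarkov delayLaguerrePoly dQ
  rw [if_neg hk]

lemma dM_one (p : ℝ) (hp0 : 0 < p) (τ : ℕ) (hτ : 1 ≤ τ) :
    delayMarkov p τ 1 = (τ:ℝ) * (1-p) * Real.sqrt p ^ (τ-1) := by
  have hs0 : Real.sqrt p ≠ 0 := ne_of_gt (Real.sqrt_pos.mpr hp0)
  have hns : -Real.sqrt p ≠ 0 := neg_ne_zero.mpr hs0
  have hs : Real.sqrt p * Real.sqrt p = p := Real.mul_self_sqrt hp0.le
  rw [dM_ne p τ 1 one_ne_zero, dQ_one p τ hτ]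
  have hx : (-p)^(τ-1) = (-Real.sqrt p)^(τ-1) * Real.sqrt p^(τ-1) := by
    rw [← mul_pow, neg_mul, hs]
  have hz : (-Real.sqrt p)^(((1:ℕ):ℤ) - (τ:ℤ)) * (-Real.sqrt p)^(τ-1) = 1 := by
    rw [← zpow_natCast (-Real.sqrt p) (τ-1), ← zpow_add₀ hns]
    rw [show ((1:ℕ):ℤ) - (τ:ℤ) + ((τ-1:ℕ):ℤ) = 0 by omega, zpow_zero]
  rw [hx]
  linear_combination ((1-p)*(τ:ℝ)*(Real.sqrt p)^(τ-1)) * hz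

lemma dM_rec (p : ℝ) (hp0 : 0 < p) (τ : ℕ) (hτ : 1 ≤ τ)
    (α β : ℝ) (hα : α = Real.sqrt p + 1/Real.sqrt p)
    (hβ : β = Real.sqrt p - 1/Real.sqrt p)
    (m : ℕ) (hm : 1 ≤ m) :
    ((m:ℝ)+1) * delayMarkov p τ (m+1) + (m:ℝ)*α*delayMarkov p τ m
      + ((m:ℝ)-1) * delayMarkov p τ (m-1) = -(τ:ℝ)*β*delayMarkov p τ m := by
  have hs0 : Real.sqrt p ≠ 0 := ne_of_gt (Real.sqrt_pos.mpr hp0)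
  have hns : -Real.sqrt p ≠ 0 := neg_ne_zero.mpr hs0
  have hs : Real.sqrt p * Real.sqrt p = p := Real.mul_self_sqrt hp0.le
  have hα' : Real.sqrt p * α = p + 1 := by
    rw [hα]; field_simp
    linear_combination hs
  have hβ' : Real.sqrt p * β = p - 1 := by
    rw [hβ]; field_simp
    linear_combination hs
  set w : ℝ := (-Real.sqrt p)^(((m-1:ℕ):ℤ) - (τ:ℤ)) with hw
  have e1 : (-Real.sqrt p)^(((m+1:ℕ):ℤ) - (τ:ℤ)) = w * (-Real.sqrt p)^(2:ℕ) := by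
    rw [hw, ← zpow_natCast (-Real.sqrt p) 2, ← zpow_add₀ hns]
    congr 1
    omega
  have e0 : (-Real.sqrt p)^(((m:ℕ):ℤ) - (τ:ℤ)) = w * (-Real.sqrt p) := by
    rw [hw, show ((m:ℕ):ℤ) - (τ:ℤ) = (((m-1:ℕ):ℤ) - (τ:ℤ)) + 1 by omega,
        zpow_add₀ hns, zpow_one]
  have d1 : delayMarkov p τ (m+1)
      = (1-p) * (w * (-Real.sqrt p)^(2:ℕ) * dQ p τ (m+1)) := by
    rw [dM_ne p τ (m+1) (by omega), e1]
  have d0 : delayMarkov p τ m = (1-p) * (w * (-Real.sqrt p) * dQ p τ m) := by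
    rw [dM_ne p τ m (by omega), e0]
  have dm1 : ((m:ℝ)-1) * delayMarkov p τ (m-1)
      = ((m:ℝ)-1) * ((1-p) * (w * dQ p τ (m-1))) := by
    rcases eq_or_ne m 1 with rfl | hm1
    · norm_num
    · rw [dM_ne p τ (m-1) (by omega)]
  rw [d1, d0, dm1]
  have hq := Qrec p τ hτ m hm
  linear_combination ((1-p)*w)*hq + (((m:ℝ)+1)*(1-p)*w*dQ p τ (m+1))*hs
    + (-(m:ℝ)*(1-p)*w*dQ p τ m)*hα' + (-(τ:ℝ)*(1-p)*w*dQ p τ m)*hβ'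

/-- Closed-form recovery of the delay: with `a_i = (i+1)h_{i+1} + iαh_i + (i−1)h_{i−1}`
and `b_i = βh_i` for `i = 1, …, M`, one has `a = −τ·b`, `h₁ = τ(1−p)(√p)^{τ−1} ≠ 0`
(so `b ≠ 0`), and `τ = −(bᵀa)/(bᵀb)`. -/
theorem delay_closed_form (p : ℝ) (hp0 : 0 < p) (hp1 : p < 1)
    (τ : ℕ) (hτ : 1 ≤ τ) (α β : ℝ)
    (hα : α = Real.sqrt p + 1 / Real.sqrt p) (hβ : β = Real.sqrt p - 1 / Real.sqrt p)
    (M : ℕ) (hM : 1 ≤ M) (a b : Fin M → ℝ)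
    (ha : ∀ i : Fin M, a i =
      (((i : ℕ) + 1 : ℝ) + 1) * delayMarkov p τ ((i : ℕ) + 1 + 1) +
        (((i : ℕ) + 1 : ℝ)) * α * delayMarkov p τ ((i : ℕ) + 1) +
        (((i : ℕ) + 1 : ℝ) - 1) * delayMarkov p τ (i : ℕ))
    (hb : ∀ i : Fin M, b i = β * delayMarkov p τ ((i : ℕ) + 1)) :
    a = -(τ : ℝ) • b ∧
      delayMarkov p τ 1 = (τ : ℝ) * (1 - p) * Real.sqrt p ^ (τ - 1) ∧
      delayMarkov p τ 1 ≠ 0 ∧ b ≠ 0 ∧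
      (τ : ℝ) = -(∑ i : Fin M, b i * a i) / (∑ i : Fin M, b i * b i) := by
  have hs0 : (0:ℝ) < Real.sqrt p := Real.sqrt_pos.mpr hp0
  have h1v : delayMarkov p τ 1 = (τ:ℝ) * (1-p) * Real.sqrt p ^ (τ-1) :=
    dM_one p hp0 τ hτ
  have h1ne : delayMarkov p τ 1 ≠ 0 := by
    rw [h1v]
    have ht : (0:ℝ) < (τ:ℝ) := by exact_mod_cast hτ
    exact ne_of_gt (mul_pos (mul_pos ht (by linarith)) (pow_pos hs0 _))
  have hβne : β ≠ 0 := by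
    intro h0
    rw [hβ] at h0
    have : Real.sqrt p * Real.sqrt p = p := Real.mul_self_sqrt hp0.le
    have h2 : Real.sqrt p * (Real.sqrt p - 1/Real.sqrt p) = 0 := by rw [h0, mul_zero]
    rw [mul_sub, this, mul_one_div, div_self (ne_of_gt hs0)] at h2
    linarith
  have hab : a = -(τ : ℝ) • b := by
    funext i
    rw [ha i, Pi.smul_apply, smul_eq_mul, hb i]
    have hr := dM_rec p hp0 τ hτ α β hα hβ ((i:ℕ)+1) (by omega)
    have : ((i:ℕ)+1)+1 = (i:ℕ)+1+1 := rfl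
    rw [show (i:ℕ)+1-1 = (i:ℕ) from rfl] at hr
    push_cast at hr ⊢
    linarith [hr]
  have hb0 : b ⟨0, hM⟩ ≠ 0 := by
    rw [hb ⟨0, hM⟩]
    exact mul_ne_zero hβne h1ne
  have hbne : b ≠ 0 := fun h => hb0 (by rw [h]; rfl)
  have hsum : ∑ i : Fin M, b i * a i = -(τ:ℝ) * ∑ i : Fin M, b i * b i := by
    rw [hab, Finset.mul_sum]
    exact Finset.sum_congr rfl (fun i _ => by
      simp only [Pi.smul_apply, smul_eq_mul]; ring)
  have hpos : (0:ℝ) < ∑ i : Fin M, b i * b i := by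
    apply Finset.sum_pos' (fun i _ => mul_self_nonneg _)
    exact ⟨⟨0, hM⟩, Finset.mem_univ _, mul_self_pos.mpr hb0⟩
  refine ⟨hab, h1v, h1ne, hbne, ?_⟩
  rw [hsum]
  field_simp
  have hS : (∑ x : Fin M, b x ^ 2) ≠ 0 := by simpa [sq] using hpos.ne'
  rw [div_self hS]
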